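/- Let A_1,...,A_n be events with an ε-near-positive dependency graph G, where 0 < ε < 1. Then Pr(∧_{i=1}^n ¬A_i) ≤ ∏_{i=1}^n [1 − (1−ε)Pr(A_i)]. -/

import Mathlib

open MeasureTheory Finset

/-- If `G` is an `ε`-near-positive dependency graph for events `A 1, ..., A n`
(`0 < ε < 1`), then `Pr(∧ᵢ ¬A i) ≤ ∏ᵢ (1 - (1-ε) Pr(A i))`. -/
theorem near_positive_upper_bound
    {Ω : Type*} [MeasurableSpace Ω] (μ : Measure Ω) [IsProbabilityMeasure μ]
    (n : ℕ) (A : Fin n → Set Ω) (hA : ∀ i, MeasurableSet (A i))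
    (G : SimpleGraph (Fin n))
    (ε : ℝ) (hε0 : 0 < ε) (hε1 : ε < 1)
    (hdisj : ∀ i j, G.Adj i j → μ (A i ∩ A j) = 0)
    (hpos : ∀ (i : Fin n) (T : Finset (Fin n)),
      (∀ j ∈ T, j ≠ i ∧ ¬ G.Adj i j) →
      0 < μ (⋂ j ∈ T, (A j)ᶜ) →
      (1 - ε) * (μ (A i)).toReal * (μ (⋂ j ∈ T, (A j)ᶜ)).toReal
        ≤ (μ (A i ∩ ⋂ j ∈ T, (A j)ᶜ)).toReal) :
    (μ (⋂ i, (A i)ᶜ)).toReal ≤ ∏ i, (1 - (1 - ε) * (μ (A i)).toReal) := by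
  have hfac : ∀ j : Fin n, 0 ≤ 1 - (1 - ε) * (μ (A j)).toReal := by
    intro j
    have h1 : (μ (A j)).toReal ≤ 1 := by
      have := prob_le_one (μ := μ) (s := A j)
      simpa using ENNReal.toReal_mono (by simp) this
    nlinarith [ENNReal.toReal_nonneg (a := μ (A j))]
  have key : ∀ S : Finset (Fin n),
      (μ (⋂ j ∈ S, (A j)ᶜ)).toReal ≤ ∏ j ∈ S, (1 - (1 - ε) * (μ (A j)).toReal) := by
    intro S
    induction S using Finset.induction with
    | empty => simp
    | @insert i S hiS ih =>
      set B := ⋂ j ∈ S, (A j)ᶜ with hB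
      have hBmeas : MeasurableSet B := by
        exact MeasurableSet.biInter (S.countable_toSet) (fun j _ => (hA j).compl)
      have hins : (⋂ j ∈ insert i S, (A j)ᶜ) = B \ A i := by
        rw [Finset.set_biInter_insert]
        ext x; simp [Set.mem_diff, hB, and_comm]
      rw [hins, Finset.prod_insert hiS]
      have hprodnn : 0 ≤ ∏ j ∈ S, (1 - (1 - ε) * (μ (A j)).toReal) :=
        Finset.prod_nonneg fun j _ => hfac j
      classical
      by_cases hB0 : μ B = 0
      · have : μ (B \ A i) = 0 := measure_mono_null Set.diff_subset hB0
        rw [this]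
        simpa using mul_nonneg (hfac i) hprodnn
      · -- μ B > 0
        have hBpos : 0 < μ B := lt_of_le_of_ne (zero_le) (Ne.symm hB0)
        set T := S.filter (fun j => ¬ G.Adj i j) with hT
        set B' := ⋂ j ∈ T, (A j)ᶜ with hB'
        have hBB' : B ⊆ B' := by
          intro x hx
          refine Set.mem_iInter₂.mpr fun j hj => ?_
          exact Set.mem_iInter₂.mp hx j (Finset.mem_filter.mp hj).1
        have hB'pos : 0 < μ B' := lt_of_lt_of_le hBpos (measure_mono hBB')
        have hTprop : ∀ j ∈ T, j ≠ i ∧ ¬ G.Adj i j := by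
          intro j hj
          rcases Finset.mem_filter.mp hj with ⟨hjS, hjA⟩
          exact ⟨fun h => hiS (h ▸ hjS), hjA⟩
        have hkey := hpos i T hTprop hB'pos
        -- μ (A i ∩ B') ≤ μ (A i ∩ B)
        have hsub : A i ∩ B' ⊆ (A i ∩ B) ∪ (⋃ j ∈ S \ T, A i ∩ A j) := by
          intro x ⟨hxA, hxB'⟩
          by_cases hxB : x ∈ B
          · exact Or.inl ⟨hxA, hxB⟩
          · right
            simp only [hB, Set.mem_iInter, Set.mem_compl_iff] at hxB
            push_neg at hxB
            obtain ⟨j, hjS, hxj⟩ := hxB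
            have hjT : j ∉ T := by
              intro hjT
              have := Set.mem_iInter₂.mp hxB' j hjT
              exact this hxj
            refine Set.mem_biUnion (Finset.mem_sdiff.mpr ⟨hjS, hjT⟩) ⟨hxA, hxj⟩
        have hnull : μ (⋃ j ∈ (S \ T : Finset (Fin n)), A i ∩ A j) = 0 := by
          refine measure_biUnion_null_iff (Finset.countable_toSet _) |>.mpr ?_
          intro j hj
          rcases Finset.mem_sdiff.mp hj with ⟨hjS, hjT⟩
          have hadj : G.Adj i j := by
            by_contra h
            exact hjT (Finset.mem_filter.mpr ⟨hjS, h⟩)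
          exact hdisj i j hadj
        have hmeq : μ (A i ∩ B') ≤ μ (A i ∩ B) := by
          calc μ (A i ∩ B') ≤ μ ((A i ∩ B) ∪ ⋃ j ∈ (S \ T : Finset (Fin n)), A i ∩ A j) :=
                measure_mono hsub
            _ ≤ μ (A i ∩ B) + μ (⋃ j ∈ (S \ T : Finset (Fin n)), A i ∩ A j) :=
                measure_union_le _ _
            _ = μ (A i ∩ B) := by rw [hnull, add_zero]
        have hfin : ∀ s : Set Ω, μ s ≠ ⊤ := fun s => measure_ne_top μ s
        have hstep : (1 - ε) * (μ (A i)).toReal * (μ B).toReal ≤ (μ (A i ∩ B)).toReal := by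
          calc (1 - ε) * (μ (A i)).toReal * (μ B).toReal
              ≤ (1 - ε) * (μ (A i)).toReal * (μ B').toReal := by
                apply mul_le_mul_of_nonneg_left
                · exact ENNReal.toReal_mono (hfin _) (measure_mono hBB')
                · exact mul_nonneg (by linarith) ENNReal.toReal_nonneg
            _ ≤ (μ (A i ∩ B')).toReal := hkey
            _ ≤ (μ (A i ∩ B)).toReal := ENNReal.toReal_mono (hfin _) hmeq
        -- μ (B \ A i) = μ B - μ (A i ∩ B)
        have hdiff : (μ (B \ A i)).toReal = (μ B).toReal - (μ (A i ∩ B)).toReal := by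
          have h1 : μ (B \ A i) + μ (B ∩ A i) = μ B := measure_diff_add_inter B (hA i)
          have h2 : B ∩ A i = A i ∩ B := Set.inter_comm _ _
          have := congrArg ENNReal.toReal h1
          rw [ENNReal.toReal_add (hfin _) (hfin _), h2] at this
          linarith
        rw [hdiff]
        calc (μ B).toReal - (μ (A i ∩ B)).toReal
            ≤ (μ B).toReal - (1 - ε) * (μ (A i)).toReal * (μ B).toReal := by linarith
          _ = (1 - (1 - ε) * (μ (A i)).toReal) * (μ B).toReal := by ring
          _ ≤ (1 - (1 - ε) * (μ (A i)).toReal) * ∏ j ∈ S, (1 - (1 - ε) * (μ (A j)).toReal) :=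
              mul_le_mul_of_nonneg_left ih (hfac i)
  have := key Finset.univ
  simpa using this
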